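/- arXiv:1706.08459 — 3 statements merged into one kernel-verified Lean document; each statement's English description precedes it below -/
import Mathlib

section
/- Under the same setting (exact data, randomized Kaczmarz with row i chosen with probability ‖a_i‖²/‖A‖_F²), the high-frequency error satisfies E[‖P_H e_{k+1}‖² | e_k] ≤ c₂ ‖P_L e_k‖² + (1 + c₂) ‖P_H e_k‖², where c₂ = (Σ_{j=L+1}^r σ_j²)/‖A‖_F². -/
open Matrix Finset

private lemma aux_expand (m : ℕ) (V : Matrix (Fin m) (Fin m) ℝ)
    (hVtV : ∀ j j' : Fin m, (∑ k, V k j * V k j') = if j = j' then 1 else 0)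
    (T : Finset (Fin m)) (c : Fin m → ℝ) :
    (∑ k, (∑ j ∈ T, c j * V k j) ^ 2) = ∑ j ∈ T, c j ^ 2 := by
  have h1 : ∀ k : Fin m, (∑ j ∈ T, c j * V k j) ^ 2
      = ∑ j ∈ T, ∑ j' ∈ T, (c j * c j') * (V k j * V k j') := by
    intro k
    rw [sq, Finset.sum_mul_sum]
    exact Finset.sum_congr rfl fun j _ => Finset.sum_congr rfl fun j' _ => by ring
  simp_rw [h1]
  rw [Finset.sum_comm]
  refine Finset.sum_congr rfl fun j hj => ?_
  rw [Finset.sum_comm]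
  have h3 : ∀ j' ∈ T, (∑ k, (c j * c j') * (V k j * V k j')) = if j = j' then c j ^ 2 else 0 := by
    intro j' _
    rw [← Finset.mul_sum, hVtV]
    by_cases h : j = j' <;> simp [h] <;> ring
  rw [Finset.sum_congr rfl h3, Finset.sum_ite_eq]
  simp [hj]

private lemma aux_parseval (m : ℕ) (V : Matrix (Fin m) (Fin m) ℝ)
    (hVVt : ∀ l l' : Fin m, (∑ j, V l j * V l' j) = if l = l' then 1 else 0)
    (z w : Fin m → ℝ) :
    (∑ l, z l * w l) = ∑ j, (∑ l, V l j * z l) * (∑ l, V l j * w l) := by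
  have h1 : ∀ j : Fin m, (∑ l, V l j * z l) * (∑ l, V l j * w l)
      = ∑ l, ∑ l', (z l * w l') * (V l j * V l' j) := by
    intro j
    rw [Finset.sum_mul_sum]
    exact Finset.sum_congr rfl fun l _ => Finset.sum_congr rfl fun l' _ => by ring
  simp_rw [h1]
  rw [Finset.sum_comm]
  refine (Finset.sum_congr rfl fun l _ => ?_).symm
  rw [Finset.sum_comm]
  have h3 : ∀ l' ∈ (univ : Finset (Fin m)),
      (∑ j, (z l * w l') * (V l j * V l' j)) = if l = l' then z l * w l else 0 := by
    intro l' _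
    rw [← Finset.mul_sum, hVVt]
    by_cases h : l = l' <;> simp [h]
  rw [Finset.sum_congr rfl h3, Finset.sum_ite_eq]
  simp

/-- Theorem 3.3 (high-frequency part), exact data:
`E[‖P_H e_{k+1}‖² | e_k] ≤ c₂‖P_L e_k‖² + (1+c₂)‖P_H e_k‖²` with
`c₂ = (Σ_{j=L+1}^r σ_j²)/‖A‖_F²` (0-based indices `j ∈ [L, r)`). -/
theorem rkm_preasymptotic_high_exact (n m : ℕ) (A : Matrix (Fin n) (Fin m) ℝ)
    (U : Matrix (Fin n) (Fin n) ℝ) (V : Matrix (Fin m) (Fin m) ℝ)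
    (S : Matrix (Fin n) (Fin m) ℝ) (σ : ℕ → ℝ)
    (hU : Uᵀ * U = 1) (hU' : U * Uᵀ = 1)
    (hV : Vᵀ * V = 1) (hV' : V * Vᵀ = 1)
    (hS : ∀ i j, S i j = if (i : ℕ) = (j : ℕ) then σ (i : ℕ) else 0)
    (hσmono : ∀ i j : ℕ, i ≤ j → σ j ≤ σ i) (hσnonneg : ∀ j, 0 ≤ σ j)
    (hA : A = U * S * Vᵀ)
    (hrows : ∀ i, A i ≠ 0)
    (L : ℕ) (hL1 : 1 ≤ L) (hLm : L ≤ m)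
    (PL PH : (Fin m → ℝ) → (Fin m → ℝ))
    (hPL : ∀ z k, PL z k = ∑ j ∈ Finset.univ.filter (fun j : Fin m => (j : ℕ) < L),
      (∑ l, V l j * z l) * V k j)
    (hPH : ∀ z k, PH z k = ∑ j ∈ Finset.univ.filter (fun j : Fin m => L ≤ (j : ℕ)),
      (∑ l, V l j * z l) * V k j)
    (F : ℝ) (hF : F = ∑ i, ∑ k, A i k ^ 2)
    (c₁ c₂ : ℝ) (hc₁ : c₁ = σ (L - 1) ^ 2 / F)
    (hc₂ : c₂ = (∑ j ∈ Finset.Ico L (min m n), σ j ^ 2) / F)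
    (ek : Fin m → ℝ) (e' : Fin n → Fin m → ℝ)
    (he' : ∀ i k, e' i k = ek k - ((A i ⬝ᵥ ek) / (∑ l, A i l ^ 2)) * A i k) :
    ∑ i, ((∑ l, A i l ^ 2) / F) * (∑ k, (PH (e' i)) k ^ 2) ≤
      c₂ * (∑ k, (PL ek) k ^ 2) + (1 + c₂) * (∑ k, (PH ek) k ^ 2) := by
  -- orthonormality of columns / rows of V
  have hVtV : ∀ j j' : Fin m, (∑ k, V k j * V k j') = if j = j' then 1 else 0 := by
    intro j j'
    have h := congrFun (congrFun hV j) j'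
    simpa [Matrix.mul_apply, Matrix.transpose_apply, Matrix.one_apply] using h
  have hVVt : ∀ l l' : Fin m, (∑ j, V l j * V l' j) = if l = l' then 1 else 0 := by
    intro l l'
    have h := congrFun (congrFun hV' l) l'
    simpa [Matrix.mul_apply, Matrix.transpose_apply, Matrix.one_apply] using h
  set H : Finset (Fin m) := Finset.univ.filter (fun j : Fin m => L ≤ (j : ℕ)) with hHdef
  set Lo : Finset (Fin m) := Finset.univ.filter (fun j : Fin m => (j : ℕ) < L) with hLodef
  set f : Fin m → ℝ := fun j => ∑ l, V l j * ek l with hfdef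
  set B : Fin n → Fin m → ℝ := fun i j => ∑ l, V l j * A i l with hBdef
  set w : Fin n → ℝ := fun i => ∑ l, A i l ^ 2 with hwdef
  set SL : ℝ := ∑ j ∈ Lo, f j ^ 2 with hSLdef
  set SH : ℝ := ∑ j ∈ H, f j ^ 2 with hSHdef
  -- norms of projections
  have hPLnorm : (∑ k, (PL ek) k ^ 2) = SL := by
    simp_rw [hPL]
    exact aux_expand m V hVtV Lo f
  have hPHnorm : (∑ k, (PH ek) k ^ 2) = SH := by
    simp_rw [hPH]
    exact aux_expand m V hVtV H f
  rw [hPLnorm, hPHnorm]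
  rcases Nat.eq_zero_or_pos n with hn | hn
  · subst hn
    have hc2 : c₂ = 0 := by
      rw [hc₂, Nat.min_zero, Finset.Ico_eq_empty (by omega), Finset.sum_empty, zero_div]
    have hSHnn : 0 ≤ SH := Finset.sum_nonneg fun j _ => sq_nonneg _
    simp [hc2]
    linarith
  -- positive row norms and F
  have hwpos : ∀ i, 0 < w i := by
    intro i
    have h := hrows i
    rw [Function.ne_iff] at h
    obtain ⟨l, hl⟩ := h
    exact Finset.sum_pos' (fun l _ => sq_nonneg _) ⟨l, Finset.mem_univ l, pow_two_pos_of_ne_zero hl⟩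
  have hFw : F = ∑ i, w i := hF
  have hFpos : 0 < F := by
    rw [hFw]
    exact Finset.sum_pos (fun i _ => hwpos i) ⟨⟨0, hn⟩, Finset.mem_univ _⟩
  have hF0 : F ≠ 0 := hFpos.ne'
  -- column orthogonality of AV
  have hAV : (A * V)ᵀ * (A * V) = Sᵀ * S := by
    have h1 : U * S * Vᵀ * V = U * S := by rw [Matrix.mul_assoc, hV, Matrix.mul_one]
    rw [hA, h1, Matrix.transpose_mul, Matrix.mul_assoc, ← Matrix.mul_assoc Uᵀ U S, hU,
      Matrix.one_mul]
  have hBorth : ∀ j j' : Fin m, (∑ i, B i j * B i j')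
      = if j = j' ∧ (j : ℕ) < n then σ (j : ℕ) ^ 2 else 0 := by
    intro j j'
    have h0 := congrFun (congrFun hAV j) j'
    simp only [Matrix.mul_apply, Matrix.transpose_apply] at h0
    have hBform : ∀ (i : Fin n) (jj : Fin m), B i jj = ∑ l, A i l * V l jj := by
      intro i jj
      exact Finset.sum_congr rfl fun l _ => mul_comm _ _
    have hL : (∑ i, B i j * B i j') = ∑ k : Fin n, S k j * S k j' := by
      rw [Finset.sum_congr rfl fun i _ => by rw [hBform i j, hBform i j']]
      exact h0
    rw [hL]
    simp only [hS]
    by_cases hjn : (j : ℕ) < n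
    · by_cases hjj : j = j'
      · subst hjj
        rw [if_pos ⟨rfl, hjn⟩]
        rw [Finset.sum_eq_single (⟨(j : ℕ), hjn⟩ : Fin n)]
        · simp [sq]
        · intro k _ hk
          have hne : (k : ℕ) ≠ (j : ℕ) := fun h => hk (Fin.ext h)
          simp [hne]
        · intro h; exact absurd (Finset.mem_univ _) h
      · rw [if_neg (by tauto)]
        apply Finset.sum_eq_zero
        intro k _
        by_cases h1 : (k : ℕ) = (j : ℕ)
        · have h2 : (k : ℕ) ≠ (j' : ℕ) := by
            intro h2
            exact hjj (Fin.ext (h1 ▸ h2))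
          simp [h2]
        · simp [h1]
    · rw [if_neg (by tauto)]
      apply Finset.sum_eq_zero
      intro k _
      have hne : (k : ℕ) ≠ (j : ℕ) := by
        have := k.isLt; omega
      simp [hne]
  -- dot products in the V basis
  have hdot : ∀ i, A i ⬝ᵥ ek = ∑ j, B i j * f j := by
    intro i
    have h := aux_parseval m V hVVt (A i) ek
    simpa [dotProduct] using h
  -- per-sample expansion of the high-frequency error
  have hhat : ∀ (i : Fin n) (j : Fin m),
      (∑ l, V l j * e' i l) = f j - ((A i ⬝ᵥ ek) / w i) * B i j := by
    intro i j
    have h : ∀ l, V l j * e' i l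
        = V l j * ek l - ((A i ⬝ᵥ ek) / w i) * (V l j * A i l) := by
      intro l; rw [he']; ring
    rw [Finset.sum_congr rfl fun l _ => h l, Finset.sum_sub_distrib, ← Finset.mul_sum]
  have hPHe' : ∀ i, (∑ k, (PH (e' i)) k ^ 2)
      = ∑ j ∈ H, (f j - ((A i ⬝ᵥ ek) / w i) * B i j) ^ 2 := by
    intro i
    simp_rw [hPH]
    rw [aux_expand m V hVtV H (fun j => ∑ l, V l j * e' i l)]
    exact Finset.sum_congr rfl fun j _ => by rw [hhat]
  -- expand each summand
  have expand : ∀ i, (w i / F) * (∑ j ∈ H, (f j - ((A i ⬝ᵥ ek) / w i) * B i j) ^ 2)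
      = (w i / F) * SH
        - (2 / F) * ((A i ⬝ᵥ ek) * ∑ j ∈ H, f j * B i j)
        + ((A i ⬝ᵥ ek) ^ 2 / (w i * F)) * (∑ j ∈ H, B i j ^ 2) := by
    intro i
    have hwne := (hwpos i).ne'
    have h1 : (∑ j ∈ H, (f j - ((A i ⬝ᵥ ek) / w i) * B i j) ^ 2)
        = SH - (2 * ((A i ⬝ᵥ ek) / w i)) * (∑ j ∈ H, f j * B i j)
          + ((A i ⬝ᵥ ek) / w i) ^ 2 * (∑ j ∈ H, B i j ^ 2) := by
      have h : ∀ j, (f j - ((A i ⬝ᵥ ek) / w i) * B i j) ^ 2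
          = f j ^ 2 - (2 * ((A i ⬝ᵥ ek) / w i)) * (f j * B i j)
            + ((A i ⬝ᵥ ek) / w i) ^ 2 * B i j ^ 2 := by
        intro j; ring
      rw [Finset.sum_congr rfl fun j _ => h j, Finset.sum_add_distrib, Finset.sum_sub_distrib,
        ← Finset.mul_sum, ← Finset.mul_sum]
    rw [h1]
    field_simp
  -- the cross term has nonnegative expectation
  have hcross : 0 ≤ ∑ i, (A i ⬝ᵥ ek) * (∑ j ∈ H, f j * B i j) := by
    have hterm : ∀ i, (A i ⬝ᵥ ek) * (∑ j ∈ H, f j * B i j)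
        = ∑ j ∈ H, ∑ j' : Fin m, (f j * f j') * (B i j * B i j') := by
      intro i
      rw [hdot i, Finset.sum_mul_sum]
      rw [Finset.sum_comm]
      exact Finset.sum_congr rfl fun j _ => Finset.sum_congr rfl fun j' _ => by ring
    have hswap : (∑ i, (A i ⬝ᵥ ek) * (∑ j ∈ H, f j * B i j))
        = ∑ j ∈ H, ∑ j' : Fin m, (f j * f j') * (∑ i, B i j * B i j') := by
      simp_rw [hterm]
      rw [Finset.sum_comm]
      refine Finset.sum_congr rfl fun j _ => ?_
      rw [Finset.sum_comm]
      exact Finset.sum_congr rfl fun j' _ => by rw [← Finset.mul_sum]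
    rw [hswap]
    apply Finset.sum_nonneg
    intro j _
    apply Finset.sum_nonneg
    intro j' _
    rw [hBorth]
    by_cases h : j = j' ∧ (j : ℕ) < n
    · obtain ⟨rfl, h2⟩ := h
      rw [if_pos ⟨rfl, h2⟩]
      exact mul_nonneg (mul_self_nonneg _) (sq_nonneg _)
    · rw [if_neg h, mul_zero]
  -- total energy identity and Cauchy－Schwarz bound
  have hsplit : SL + SH = ∑ j, f j ^ 2 := by
    have h := Finset.sum_filter_add_sum_filter_not (Finset.univ : Finset (Fin m))
      (fun j : Fin m => (j : ℕ) < L) (fun j => f j ^ 2)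
    simpa [hLodef, hHdef, not_lt] using h
  have heknorm : (∑ l, ek l ^ 2) = SL + SH := by
    have h := aux_parseval m V hVVt ek ek
    rw [hsplit]
    simp only [← sq] at h
    exact h
  have hcs : ∀ i, (A i ⬝ᵥ ek) ^ 2 ≤ w i * (SL + SH) := by
    intro i
    have h2 : (A i ⬝ᵥ ek) = ∑ l, A i l * ek l := rfl
    rw [h2, ← heknorm]
    calc (∑ l, A i l * ek l) ^ 2 ≤ (∑ l, A i l ^ 2) * (∑ l, ek l ^ 2) :=
          Finset.sum_mul_sq_le_sq_mul_sq Finset.univ (A i) ek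
      _ = w i * (∑ l, ek l ^ 2) := rfl
  -- sum of high-frequency row energies
  have hsetIco : (Finset.range m).filter (fun j => L ≤ j ∧ j < n) = Finset.Ico L (min m n) := by
    ext x
    simp only [Finset.mem_filter, Finset.mem_range, Finset.mem_Ico, Nat.lt_min]
    omega
  have hsum_d : (∑ j ∈ H, (if (j : ℕ) < n then σ (j : ℕ) ^ 2 else 0))
      = ∑ j ∈ Finset.Ico L (min m n), σ j ^ 2 := by
    rw [hHdef, Finset.sum_filter]
    rw [Fin.sum_univ_eq_sum_range
      (fun j => if L ≤ j then (if j < n then σ j ^ 2 else 0) else 0) m]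
    rw [← hsetIco, Finset.sum_filter]
    refine Finset.sum_congr rfl fun j _ => ?_
    by_cases h1 : L ≤ j <;> by_cases h2 : j < n <;> simp [h1, h2]
  have hsum_hi : (∑ i, ∑ j ∈ H, B i j ^ 2) = ∑ j ∈ Finset.Ico L (min m n), σ j ^ 2 := by
    rw [Finset.sum_comm]
    have hstep : ∀ j ∈ H, (∑ i, B i j ^ 2) = if (j : ℕ) < n then σ (j : ℕ) ^ 2 else 0 := by
      intro j _
      calc (∑ i, B i j ^ 2) = ∑ i, B i j * B i j := by
            exact Finset.sum_congr rfl fun i _ => sq (B i j)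
        _ = if (j : ℕ) < n then σ (j : ℕ) ^ 2 else 0 := by rw [hBorth j j]; simp
    rw [Finset.sum_congr rfl hstep]
    exact hsum_d
  -- bound the quadratic term
  have hT3 : (∑ i, ((A i ⬝ᵥ ek) ^ 2 / (w i * F)) * (∑ j ∈ H, B i j ^ 2))
      ≤ c₂ * (SL + SH) := by
    have step1 : ∀ i, ((A i ⬝ᵥ ek) ^ 2 / (w i * F)) * (∑ j ∈ H, B i j ^ 2)
        ≤ ((SL + SH) / F) * (∑ j ∈ H, B i j ^ 2) := by
      intro i
      apply mul_le_mul_of_nonneg_right _ (Finset.sum_nonneg fun j _ => sq_nonneg _)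
      rw [div_le_div_iff₀ (mul_pos (hwpos i) hFpos) hFpos]
      nlinarith [hcs i, hFpos.le, hwpos i]
    calc (∑ i, ((A i ⬝ᵥ ek) ^ 2 / (w i * F)) * (∑ j ∈ H, B i j ^ 2))
        ≤ ∑ i, ((SL + SH) / F) * (∑ j ∈ H, B i j ^ 2) :=
          Finset.sum_le_sum fun i _ => step1 i
      _ = ((SL + SH) / F) * (∑ i, ∑ j ∈ H, B i j ^ 2) := by rw [← Finset.mul_sum]
      _ = ((SL + SH) / F) * (∑ j ∈ Finset.Ico L (min m n), σ j ^ 2) := by rw [hsum_hi]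
      _ = c₂ * (SL + SH) := by rw [hc₂]; field_simp
  -- assemble
  have hmain : (∑ i, (w i / F) * (∑ k, (PH (e' i)) k ^ 2))
      = SH - (2 / F) * (∑ i, (A i ⬝ᵥ ek) * (∑ j ∈ H, f j * B i j))
        + ∑ i, ((A i ⬝ᵥ ek) ^ 2 / (w i * F)) * (∑ j ∈ H, B i j ^ 2) := by
    have h : ∀ i, (w i / F) * (∑ k, (PH (e' i)) k ^ 2)
        = (w i / F) * SH
          - (2 / F) * ((A i ⬝ᵥ ek) * ∑ j ∈ H, f j * B i j)
          + ((A i ⬝ᵥ ek) ^ 2 / (w i * F)) * (∑ j ∈ H, B i j ^ 2) := by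
      intro i
      rw [hPHe' i, expand i]
    have hT1 : (∑ x : Fin n, w x / F * SH) = SH := by
      rw [← Finset.sum_mul, ← Finset.sum_div, ← hFw, div_self hF0, one_mul]
    rw [Finset.sum_congr rfl fun i _ => h i, Finset.sum_add_distrib, Finset.sum_sub_distrib,
      ← Finset.mul_sum, hT1]
  rw [hmain]
  have h2F : 0 ≤ (2 / F) * (∑ i, (A i ⬝ᵥ ek) * (∑ j ∈ H, f j * B i j)) :=
    mul_nonneg (by positivity) hcross
  linarith
end

section
/- With the same noisy-data setting, the high-frequency error satisfies E[‖P_H e_{k+1}‖² | e_k] ≤ c₂‖P_L e_k‖² + (1+c₂)‖P_H e_k‖² + δ²/‖A‖_F² + (2/‖A‖_F)·δ·√c₂·‖e_k‖. -/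
open Matrix Finset

/-- Theorem 3.6 (high-frequency part), noisy data `bᵢᵟ = ⟨aᵢ,x*⟩ + ηᵢ`, `‖η‖ ≤ δ`:
`E[‖P_H e_{k+1}‖² | e_k] ≤ c₂‖P_L e_k‖² + (1+c₂)‖P_H e_k‖² + δ²/‖A‖_F² + (2/‖A‖_F)δ√c₂‖e_k‖`,
with `c₁ = σ_L²/‖A‖_F²`, `c₂ = (Σ_{j=L+1}^r σ_j²)/‖A‖_F²` (0-based indexing; `F = ‖A‖_F²`). -/
theorem rkm_preasymptotic_high_noisy (n m : ℕ) (A : Matrix (Fin n) (Fin m) ℝ)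
    (U : Matrix (Fin n) (Fin n) ℝ) (V : Matrix (Fin m) (Fin m) ℝ)
    (S : Matrix (Fin n) (Fin m) ℝ) (σ : ℕ → ℝ)
    (hU : Uᵀ * U = 1) (hU' : U * Uᵀ = 1)
    (hV : Vᵀ * V = 1) (hV' : V * Vᵀ = 1)
    (hS : ∀ i j, S i j = if (i : ℕ) = (j : ℕ) then σ (i : ℕ) else 0)
    (hσmono : ∀ i j : ℕ, i ≤ j → σ j ≤ σ i) (hσnonneg : ∀ j, 0 ≤ σ j)
    (hA : A = U * S * Vᵀ)
    (hrows : ∀ i, A i ≠ 0)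
    (L : ℕ) (hL1 : 1 ≤ L) (hLm : L ≤ m)
    (PL PH : (Fin m → ℝ) → (Fin m → ℝ))
    (hPL : ∀ z k, PL z k = ∑ j ∈ Finset.univ.filter (fun j : Fin m => (j : ℕ) < L),
      (∑ l, V l j * z l) * V k j)
    (hPH : ∀ z k, PH z k = ∑ j ∈ Finset.univ.filter (fun j : Fin m => L ≤ (j : ℕ)),
      (∑ l, V l j * z l) * V k j)
    (F : ℝ) (hF : F = ∑ i, ∑ k, A i k ^ 2)
    (c₁ c₂ : ℝ) (hc₁ : c₁ = σ (L - 1) ^ 2 / F)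
    (hc₂ : c₂ = (∑ j ∈ Finset.Ico L (min m n), σ j ^ 2) / F)
    (δ : ℝ) (hδ : 0 ≤ δ) (η : Fin n → ℝ) (hη : ∑ i, η i ^ 2 ≤ δ ^ 2)
    (ek : Fin m → ℝ) (e' : Fin n → Fin m → ℝ)
    (he' : ∀ i k, e' i k = ek k - ((A i ⬝ᵥ ek) / (∑ l, A i l ^ 2)) * A i k
      + η i * A i k / (∑ l, A i l ^ 2)) :
    ∑ i, ((∑ l, A i l ^ 2) / F) * (∑ k, (PH (e' i)) k ^ 2) ≤
      c₂ * (∑ k, (PL ek) k ^ 2) + (1 + c₂) * (∑ k, (PH ek) k ^ 2)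
      + δ ^ 2 / F + (2 / Real.sqrt F) * δ * Real.sqrt c₂ * Real.sqrt (∑ k, ek k ^ 2) := by
  classical
  -- abstract definitions
  obtain ⟨c, hc⟩ : ∃ c : (Fin m → ℝ) → Fin m → ℝ, ∀ z j, c z j = ∑ l, V l j * z l :=
    ⟨_, fun _ _ => rfl⟩
  obtain ⟨w, hw⟩ : ∃ w : Fin n → ℝ, ∀ i, w i = ∑ l, A i l ^ 2 := ⟨_, fun _ => rfl⟩
  obtain ⟨τ, hτ⟩ : ∃ τ : Fin m → ℝ, ∀ j, τ j = if (j : ℕ) < n then σ (j : ℕ) else 0 :=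
    ⟨_, fun _ => rfl⟩
  obtain ⟨uu, huu⟩ : ∃ uu : Fin m → Fin n → ℝ,
      ∀ j i, uu j i = if h : (j : ℕ) < n then U i ⟨(j : ℕ), h⟩ else 0 := ⟨_, fun _ _ => rfl⟩
  set H : Finset (Fin m) := Finset.univ.filter (fun j : Fin m => L ≤ (j : ℕ)) with hH
  have hwpos : ∀ i, 0 < w i := by
    intro i
    obtain ⟨k, hk⟩ := Function.ne_iff.mp (hrows i)
    rw [hw]
    exact Finset.sum_pos' (fun l _ => sq_nonneg _) ⟨k, Finset.mem_univ k, pow_two_pos_of_ne_zero (by simpa using hk)⟩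
  have hFw : F = ∑ i, w i := by rw [hF]; exact Finset.sum_congr rfl fun i _ => (hw i).symm
  -- orthonormality facts
  have hVcol : ∀ j j' : Fin m, (∑ l, V l j * V l j') = if j = j' then 1 else 0 := by
    intro j j'
    have h := congrFun (congrFun hV j) j'
    simpa [Matrix.mul_apply, Matrix.one_apply, Matrix.transpose_apply] using h
  have hVrow : ∀ k k' : Fin m, (∑ j, V k j * V k' j) = if k = k' then 1 else 0 := by
    intro k k'
    have h := congrFun (congrFun hV' k) k'
    simpa [Matrix.mul_apply, Matrix.one_apply, Matrix.transpose_apply] using h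
  have hUcol : ∀ p p' : Fin n, (∑ i, U i p * U i p') = if p = p' then 1 else 0 := by
    intro p p'
    have h := congrFun (congrFun hU p) p'
    simpa [Matrix.mul_apply, Matrix.one_apply, Matrix.transpose_apply] using h
  -- generic diagonalisation of bilinear sums for any orthonormal system
  have hgen : ∀ (W : Fin m → Fin m → ℝ),
      (∀ a b : Fin m, (∑ k, W k a * W k b) = if a = b then 1 else 0) →
      ∀ (s : Finset (Fin m)) (f g : Fin m → ℝ),
      (∑ k, (∑ j ∈ s, f j * W k j) * (∑ j ∈ s, g j * W k j)) = ∑ j ∈ s, f j * g j := by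
    intro W hW s f g
    calc ∑ k, (∑ j ∈ s, f j * W k j) * (∑ j ∈ s, g j * W k j)
        = ∑ k, ∑ j ∈ s, ∑ j' ∈ s, (f j * g j') * (W k j * W k j') := by
          refine Finset.sum_congr rfl fun k _ => ?_
          rw [Finset.sum_mul_sum]
          exact Finset.sum_congr rfl fun j _ => Finset.sum_congr rfl fun j' _ => by ring
      _ = ∑ j ∈ s, ∑ j' ∈ s, (f j * g j') * ∑ k, W k j * W k j' := by
          rw [Finset.sum_comm]
          refine Finset.sum_congr rfl fun j _ => ?_
          rw [Finset.sum_comm]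
          exact Finset.sum_congr rfl fun j' _ => (Finset.mul_sum _ _ _).symm
      _ = ∑ j ∈ s, f j * g j := by
          refine Finset.sum_congr rfl fun j hj => ?_
          rw [Finset.sum_congr rfl fun j' (_ : j' ∈ s) => by
            rw [hW j j', mul_ite, mul_one, mul_zero]]
          rw [Finset.sum_ite_eq s j (fun j' => f j * g j'), if_pos hj]
  -- Parseval
  have hPar : ∀ x y : Fin m → ℝ, (∑ j, c x j * c y j) = ∑ k, x k * y k := by
    intro x y
    have := hgen (fun k j => V j k) (fun a b => hVrow a b) Finset.univ x y
    simpa [hc, mul_comm] using this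
  -- coefficients of the rows of A
  have hcA : ∀ i j, c (A i) j = τ j * uu j i := by
    intro i j
    have hAV : A * V = U * S := by
      rw [hA, Matrix.mul_assoc, hV, Matrix.mul_one]
    have h1 : c (A i) j = (A * V) i j := by
      rw [hc, Matrix.mul_apply]
      exact Finset.sum_congr rfl fun l _ => mul_comm _ _
    rw [h1, hAV, Matrix.mul_apply, hτ, huu]
    by_cases h : (j : ℕ) < n
    · rw [dif_pos h, if_pos h]
      rw [Finset.sum_eq_single (⟨(j : ℕ), h⟩ : Fin n)]
      · rw [hS]; simp [mul_comm]
      · intro p _ hp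
        rw [hS, if_neg, mul_zero]
        exact fun hpj => hp (Fin.ext hpj)
      · intro habs; exact absurd (Finset.mem_univ _) habs
    · rw [dif_neg h, if_neg h, zero_mul]
      refine Finset.sum_eq_zero fun p _ => ?_
      rw [hS, if_neg, mul_zero]
      exact fun hpj => h (hpj ▸ p.isLt)
  have huuo : ∀ j j' : Fin m, (∑ i, uu j i * uu j' i)
      = if (j : ℕ) = (j' : ℕ) ∧ (j : ℕ) < n then 1 else 0 := by
    intro j j'
    by_cases h : (j : ℕ) < n
    · by_cases h' : (j' : ℕ) < n
      · have := hUcol ⟨(j : ℕ), h⟩ ⟨(j' : ℕ), h'⟩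
        simp only [huu, dif_pos h, dif_pos h']
        rw [this]
        congr 1
        simp only [Fin.mk.injEq, eq_iff_iff]
        constructor
        · exact fun hh => ⟨hh, h⟩
        · exact fun hh => hh.1
      · have : ¬((j : ℕ) = (j' : ℕ) ∧ (j : ℕ) < n) := fun hh => h' (hh.1 ▸ hh.2)
        rw [if_neg this]
        refine Finset.sum_eq_zero fun i _ => ?_
        rw [huu j' i, dif_neg h', mul_zero]
    · have : ¬((j : ℕ) = (j' : ℕ) ∧ (j : ℕ) < n) := fun hh => h hh.2
      rw [if_neg this]
      refine Finset.sum_eq_zero fun i _ => ?_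
      rw [huu j i, dif_neg h, zero_mul]
  have hAAd : ∀ j, (∑ i, c (A i) j ^ 2) = τ j ^ 2 := by
    intro j
    have h1 : (∑ i, c (A i) j ^ 2) = τ j ^ 2 * ∑ i, uu j i * uu j i := by
      rw [Finset.mul_sum]
      exact Finset.sum_congr rfl fun i _ => by rw [hcA]; ring
    rw [h1, huuo]
    by_cases h : (j : ℕ) < n
    · simp [h]
    · rw [if_neg (fun hh => h hh.2), mul_zero, hτ, if_neg h]
      ring
  have hAAo : ∀ j j' : Fin m, j ≠ j' → (∑ i, c (A i) j * c (A i) j') = 0 := by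
    intro j j' hjj
    have h1 : (∑ i, c (A i) j * c (A i) j') = (τ j * τ j') * ∑ i, uu j i * uu j' i := by
      rw [Finset.mul_sum]
      exact Finset.sum_congr rfl fun i _ => by rw [hcA, hcA]; ring
    rw [h1, huuo, if_neg, mul_zero]
    exact fun hh => hjj (Fin.ext hh.1)
  -- case n = 0
  rcases Nat.eq_zero_or_pos n with hn | hn
  · subst hn
    have hF0 : F = 0 := by rw [hF]; simp
    have hc₂0 : c₂ = 0 := by rw [hc₂, hF0, div_zero]
    rw [hc₂0, hF0]
    simp only [Real.sqrt_zero, div_zero, zero_mul, mul_zero, zero_add, add_zero,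
      Finset.univ_eq_empty, Finset.sum_empty]
    have : (0:ℝ) ≤ ∑ k, (PH ek) k ^ 2 := Finset.sum_nonneg fun k _ => sq_nonneg _
    linarith
  have hFpos : 0 < F := by
    rw [hFw]
    exact Finset.sum_pos (fun i _ => hwpos i) ⟨⟨0, hn⟩, Finset.mem_univ _⟩
  have hFne : F ≠ 0 := ne_of_gt hFpos
  -- sum of high-frequency row norms
  have hτH : (∑ j ∈ H, τ j ^ 2) = c₂ * F := by
    have h1 : (∑ j ∈ H, τ j ^ 2) = ∑ j : Fin m, if L ≤ (j : ℕ) then τ j ^ 2 else 0 := by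
      rw [hH, Finset.sum_filter]
    have h2 : (∑ j : Fin m, if L ≤ (j : ℕ) then τ j ^ 2 else 0)
        = ∑ j ∈ Finset.range m, (if L ≤ j ∧ j < n then σ j ^ 2 else 0) := by
      rw [← Fin.sum_univ_eq_sum_range (fun j => if L ≤ j ∧ j < n then σ j ^ 2 else 0) m]
      refine Finset.sum_congr rfl fun j _ => ?_
      rw [hτ]
      by_cases h : L ≤ (j : ℕ) <;> by_cases h' : (j : ℕ) < n <;>
        simp [h, h'] <;> simp_all
    have h3 : (∑ j ∈ Finset.range m, (if L ≤ j ∧ j < n then σ j ^ 2 else 0))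
        = ∑ j ∈ Finset.Ico L (min m n), σ j ^ 2 := by
      rw [← Finset.sum_filter]
      refine Finset.sum_congr ?_ fun _ _ => rfl
      ext j
      simp only [Finset.mem_filter, Finset.mem_range, Finset.mem_Ico, lt_min_iff]
      omega
    rw [h1, h2, h3, hc₂, div_mul_cancel₀ _ hFne]
  have hc₂nonneg : 0 ≤ c₂ := by
    rw [hc₂]
    exact div_nonneg (Finset.sum_nonneg fun j _ => sq_nonneg _) hFpos.le
  -- norms of projections via coefficients
  have hPHnorm : ∀ z, (∑ k, PH z k ^ 2) = ∑ j ∈ H, c z j ^ 2 := by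
    intro z
    have := hgen V hVcol H (c z) (c z)
    calc (∑ k, PH z k ^ 2)
        = ∑ k, (∑ j ∈ H, c z j * V k j) * (∑ j ∈ H, c z j * V k j) := by
          refine Finset.sum_congr rfl fun k _ => ?_
          rw [hPH, sq]
          congr 1 <;> exact Finset.sum_congr rfl fun j _ => by rw [hc]
      _ = ∑ j ∈ H, c z j * c z j := this
      _ = ∑ j ∈ H, c z j ^ 2 := Finset.sum_congr rfl fun j _ => (sq _).symm
  have hPLnorm : (∑ k, PL ek k ^ 2)
      = ∑ j ∈ Finset.univ.filter (fun j : Fin m => (j : ℕ) < L), c ek j ^ 2 := by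
    have := hgen V hVcol (Finset.univ.filter (fun j : Fin m => (j : ℕ) < L)) (c ek) (c ek)
    calc (∑ k, PL ek k ^ 2)
        = ∑ k, (∑ j ∈ Finset.univ.filter (fun j : Fin m => (j : ℕ) < L), c ek j * V k j) *
            (∑ j ∈ Finset.univ.filter (fun j : Fin m => (j : ℕ) < L), c ek j * V k j) := by
          refine Finset.sum_congr rfl fun k _ => ?_
          rw [hPL, sq]
          congr 1 <;> exact Finset.sum_congr rfl fun j _ => by rw [hc]
      _ = ∑ j ∈ Finset.univ.filter (fun j : Fin m => (j : ℕ) < L), c ek j * c ek j := this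
      _ = _ := Finset.sum_congr rfl fun j _ => (sq _).symm
  -- Parseval split of the error
  obtain ⟨E, hE⟩ : ∃ E : ℝ, E = ∑ k, ek k ^ 2 := ⟨_, rfl⟩
  obtain ⟨EL, hEL⟩ : ∃ x : ℝ, x = ∑ j ∈ Finset.univ.filter (fun j : Fin m => (j : ℕ) < L),
      c ek j ^ 2 := ⟨_, rfl⟩
  obtain ⟨EH, hEH⟩ : ∃ x : ℝ, x = ∑ j ∈ H, c ek j ^ 2 := ⟨_, rfl⟩
  have hEnonneg : 0 ≤ E := hE ▸ Finset.sum_nonneg fun k _ => sq_nonneg _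
  have hEsplit : E = EL + EH := by
    rw [hE, hEL, hEH, hH]
    have h1 : (∑ k, ek k ^ 2) = ∑ j : Fin m, c ek j ^ 2 :=
      calc (∑ k, ek k ^ 2) = ∑ k, ek k * ek k := Finset.sum_congr rfl fun k _ => sq _
        _ = ∑ j, c ek j * c ek j := (hPar ek ek).symm
        _ = ∑ j, c ek j ^ 2 := Finset.sum_congr rfl fun j _ => (sq _).symm
    rw [h1, ← Finset.sum_filter_add_sum_filter_not Finset.univ (fun j : Fin m => (j : ℕ) < L)]
    congr 1
    refine Finset.sum_congr ?_ fun _ _ => rfl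
    ext j
    simp [not_lt]
  -- per-row quantities
  obtain ⟨d, hd⟩ : ∃ d : Fin n → ℝ, ∀ i, d i = A i ⬝ᵥ ek := ⟨_, fun _ => rfl⟩
  obtain ⟨α, hα⟩ : ∃ α : Fin n → ℝ, ∀ i, α i = ∑ j ∈ H, c ek j * c (A i) j := ⟨_, fun _ => rfl⟩
  obtain ⟨β, hβ⟩ : ∃ β : Fin n → ℝ, ∀ i, β i = ∑ j ∈ H, c (A i) j ^ 2 := ⟨_, fun _ => rfl⟩
  obtain ⟨γ, hγ⟩ : ∃ γ : Fin n → ℝ, ∀ i, γ i = α i - d i * β i / w i := ⟨_, fun _ => rfl⟩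
  obtain ⟨t, ht⟩ : ∃ t : Fin n → ℝ, ∀ i, t i = (d i - η i) / w i := ⟨_, fun _ => rfl⟩
  have hβnonneg : ∀ i, 0 ≤ β i := fun i => (hβ i) ▸ Finset.sum_nonneg fun j _ => sq_nonneg _
  have hwpar : ∀ i, w i = ∑ j : Fin m, c (A i) j ^ 2 := by
    intro i
    calc w i = ∑ l, A i l * A i l := by
          rw [hw]; exact Finset.sum_congr rfl fun l _ => sq _
      _ = ∑ j, c (A i) j * c (A i) j := (hPar (A i) (A i)).symm
      _ = ∑ j, c (A i) j ^ 2 := Finset.sum_congr rfl fun j _ => (sq _).symm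
  have hβw : ∀ i, β i ≤ w i := by
    intro i
    rw [hβ, hwpar]
    exact Finset.sum_le_sum_of_subset_of_nonneg (Finset.subset_univ H)
      (fun j _ _ => sq_nonneg _)
  have hβsum : (∑ i, β i) = c₂ * F := by
    rw [← hτH]
    calc (∑ i, β i) = ∑ i, ∑ j ∈ H, c (A i) j ^ 2 := Finset.sum_congr rfl fun i _ => hβ i
      _ = ∑ j ∈ H, ∑ i, c (A i) j ^ 2 := Finset.sum_comm
      _ = ∑ j ∈ H, τ j ^ 2 := Finset.sum_congr rfl fun j _ => hAAd j
  have hdpar : ∀ i, d i = ∑ j, c (A i) j * c ek j := by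
    intro i
    rw [hd, hPar (A i) ek]
    rfl
  -- the drift term is nonnegative
  have hAd : ∀ j, (∑ i, c (A i) j * d i) = τ j ^ 2 * c ek j := by
    intro j
    calc (∑ i, c (A i) j * d i)
        = ∑ i, ∑ j', c ek j' * (c (A i) j * c (A i) j') := by
          refine Finset.sum_congr rfl fun i _ => ?_
          rw [hdpar, Finset.mul_sum]
          exact Finset.sum_congr rfl fun j' _ => by ring
      _ = ∑ j', c ek j' * ∑ i, c (A i) j * c (A i) j' := by
          rw [Finset.sum_comm]
          exact Finset.sum_congr rfl fun j' _ => (Finset.mul_sum _ _ _).symm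
      _ = τ j ^ 2 * c ek j := by
          rw [Finset.sum_eq_single j]
          · have h2 : (∑ i, c (A i) j * c (A i) j) = τ j ^ 2 :=
              calc (∑ i, c (A i) j * c (A i) j) = ∑ i, c (A i) j ^ 2 :=
                    Finset.sum_congr rfl fun i _ => (sq _).symm
                _ = τ j ^ 2 := hAAd j
            rw [h2]; ring
          · intro j' _ hj'
            rw [hAAo j j' (fun hh => hj' (hh.symm)), mul_zero]
          · intro habs; exact absurd (Finset.mem_univ _) habs
  have hX1 : 0 ≤ ∑ i, d i * α i := by
    have h1 : (∑ i, d i * α i) = ∑ j ∈ H, c ek j * (τ j ^ 2 * c ek j) := by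
      calc (∑ i, d i * α i)
          = ∑ i, ∑ j ∈ H, c ek j * (c (A i) j * d i) := by
            refine Finset.sum_congr rfl fun i _ => ?_
            rw [hα, Finset.mul_sum]
            exact Finset.sum_congr rfl fun j _ => by ring
        _ = ∑ j ∈ H, c ek j * ∑ i, c (A i) j * d i := by
            rw [Finset.sum_comm]
            exact Finset.sum_congr rfl fun j _ => (Finset.mul_sum _ _ _).symm
        _ = ∑ j ∈ H, c ek j * (τ j ^ 2 * c ek j) :=
            Finset.sum_congr rfl fun j _ => by rw [hAd]
    rw [h1]
    refine Finset.sum_nonneg fun j _ => ?_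
    have : c ek j * (τ j ^ 2 * c ek j) = τ j ^ 2 * c ek j ^ 2 := by ring
    rw [this]
    positivity
  -- Cauchy-Schwarz bounds
  have hd0 : ∀ i, d i = ∑ k, A i k * ek k := by intro i; rw [hd]; rfl
  have hCS : ∀ i, d i ^ 2 ≤ w i * E := by
    intro i
    rw [hd0, hw, hE]
    exact Finset.sum_mul_sq_le_sq_mul_sq Finset.univ (A i) ek
  have hX2 : (∑ i, d i ^ 2 * β i / w i) ≤ E * (c₂ * F) := by
    calc (∑ i, d i ^ 2 * β i / w i) ≤ ∑ i, E * β i := by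
          refine Finset.sum_le_sum fun i _ => ?_
          rw [div_le_iff₀ (hwpos i)]
          calc d i ^ 2 * β i ≤ (w i * E) * β i :=
                mul_le_mul_of_nonneg_right (hCS i) (hβnonneg i)
            _ = E * β i * w i := by ring
      _ = E * (c₂ * F) := by rw [← Finset.mul_sum, hβsum]
  have clin : ∀ (s : ℝ) (x y : Fin m → ℝ) (j : Fin m),
      c (fun k => x k - s * y k) j = c x j - s * c y j := by
    intro s x y j
    rw [hc, hc, hc]
    calc (∑ l, V l j * (x l - s * y l))
        = ∑ l, (V l j * x l - s * (V l j * y l)) :=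
          Finset.sum_congr rfl fun l _ => by ring
      _ = (∑ l, V l j * x l) - s * ∑ l, V l j * y l := by
          rw [Finset.sum_sub_distrib, Finset.mul_sum]
  have hγCS : ∀ i, γ i ^ 2 ≤ E * β i := by
    intro i
    have hwne : w i ≠ 0 := (hwpos i).ne'
    have hsform : γ i = ∑ j ∈ H, (c ek j - d i / w i * c (A i) j) * c (A i) j := by
      rw [hγ, hα, hβ]
      calc (∑ j ∈ H, c ek j * c (A i) j) - d i * (∑ j ∈ H, c (A i) j ^ 2) / w i
          = ∑ j ∈ H, (c ek j * c (A i) j - d i / w i * c (A i) j ^ 2) := by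
            rw [Finset.sum_sub_distrib, ← Finset.mul_sum]
            ring
        _ = ∑ j ∈ H, (c ek j - d i / w i * c (A i) j) * c (A i) j :=
            Finset.sum_congr rfl fun j _ => by ring
    have h1 : γ i ^ 2 ≤ (∑ j ∈ H, (c ek j - d i / w i * c (A i) j) ^ 2) *
        (∑ j ∈ H, c (A i) j ^ 2) := by
      rw [hsform]
      exact Finset.sum_mul_sq_le_sq_mul_sq H _ _
    have h2 : (∑ j ∈ H, (c ek j - d i / w i * c (A i) j) ^ 2) ≤ E := by
      have hsub : (∑ j ∈ H, (c ek j - d i / w i * c (A i) j) ^ 2)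
          ≤ ∑ j : Fin m, (c ek j - d i / w i * c (A i) j) ^ 2 :=
        Finset.sum_le_sum_of_subset_of_nonneg (Finset.subset_univ H)
          (fun _ _ _ => sq_nonneg _)
      have hall : (∑ j : Fin m, (c ek j - d i / w i * c (A i) j) ^ 2) = E - d i ^ 2 / w i := by
        have hcl : ∀ j, c ek j - d i / w i * c (A i) j
            = c (fun k => ek k - d i / w i * A i k) j :=
          fun j => (clin (d i / w i) ek (A i) j).symm
        calc (∑ j : Fin m, (c ek j - d i / w i * c (A i) j) ^ 2)
            = ∑ j : Fin m, c (fun k => ek k - d i / w i * A i k) j *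
                c (fun k => ek k - d i / w i * A i k) j := by
              refine Finset.sum_congr rfl fun j _ => ?_
              rw [hcl j]
              exact sq _
          _ = ∑ k, (ek k - d i / w i * A i k) * (ek k - d i / w i * A i k) := hPar _ _
          _ = E - 2 * (d i / w i) * (∑ k, A i k * ek k)
              + (d i / w i) ^ 2 * (∑ k, A i k ^ 2) := by
              rw [Finset.sum_congr rfl fun k (_ : k ∈ Finset.univ) =>
                (by ring : (ek k - d i / w i * A i k) * (ek k - d i / w i * A i k)
                  = ek k ^ 2 - 2 * (d i / w i) * (A i k * ek k)
                    + (d i / w i) ^ 2 * A i k ^ 2)]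
              rw [Finset.sum_add_distrib, Finset.sum_sub_distrib, ← Finset.mul_sum,
                ← Finset.mul_sum, ← hE]
          _ = E - d i ^ 2 / w i := by
              rw [← hd0, ← hw]
              field_simp
              ring
      have hd2w : 0 ≤ d i ^ 2 / w i := div_nonneg (sq_nonneg _) (hwpos i).le
      linarith
    calc γ i ^ 2 ≤ (∑ j ∈ H, (c ek j - d i / w i * c (A i) j) ^ 2) *
          (∑ j ∈ H, c (A i) j ^ 2) := h1
      _ ≤ E * (∑ j ∈ H, c (A i) j ^ 2) :=
          mul_le_mul_of_nonneg_right h2 (Finset.sum_nonneg fun j _ => sq_nonneg _)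
      _ = E * β i := by rw [← hβ]
  have hX3 : (∑ i, η i * γ i) ≤ δ * (Real.sqrt E * (Real.sqrt c₂ * Real.sqrt F)) := by
    have hγsum : (∑ i, γ i ^ 2) ≤ E * (c₂ * F) := by
      calc (∑ i, γ i ^ 2) ≤ ∑ i, E * β i := Finset.sum_le_sum fun i _ => hγCS i
        _ = E * (c₂ * F) := by rw [← Finset.mul_sum, hβsum]
    have hcs2 : (∑ i, η i * γ i) ^ 2 ≤ (∑ i, η i ^ 2) * (∑ i, γ i ^ 2) :=
      Finset.sum_mul_sq_le_sq_mul_sq Finset.univ η γ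
    have hγ2nonneg : 0 ≤ ∑ i, γ i ^ 2 := Finset.sum_nonneg fun i _ => sq_nonneg _
    have hb : (∑ i, η i * γ i) ^ 2 ≤ δ ^ 2 * (E * (c₂ * F)) :=
      le_trans hcs2 (mul_le_mul hη hγsum hγ2nonneg (sq_nonneg δ))
    calc (∑ i, η i * γ i) ≤ |∑ i, η i * γ i| := le_abs_self _
      _ = Real.sqrt ((∑ i, η i * γ i) ^ 2) := (Real.sqrt_sq_eq_abs _).symm
      _ ≤ Real.sqrt (δ ^ 2 * (E * (c₂ * F))) := Real.sqrt_le_sqrt hb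
      _ = δ * (Real.sqrt E * (Real.sqrt c₂ * Real.sqrt F)) := by
          rw [Real.sqrt_mul (sq_nonneg δ), Real.sqrt_sq hδ, Real.sqrt_mul hEnonneg,
            Real.sqrt_mul hc₂nonneg]
  have hX4 : (∑ i, η i ^ 2 * β i / w i) ≤ δ ^ 2 := by
    calc (∑ i, η i ^ 2 * β i / w i) ≤ ∑ i, η i ^ 2 := by
          refine Finset.sum_le_sum fun i _ => ?_
          rw [div_le_iff₀ (hwpos i)]
          exact mul_le_mul_of_nonneg_left (hβw i) (sq_nonneg (η i))
      _ ≤ δ ^ 2 := hη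
  -- per-row expansion
  have hper : ∀ i, (w i / F) * (∑ j ∈ H, c (e' i) j ^ 2)
      = (w i / F) * EH - (2 / F) * (d i * α i) + (1 / F) * (d i ^ 2 * β i / w i)
        + (2 / F) * (η i * γ i) + (1 / F) * (η i ^ 2 * β i / w i) := by
    intro i
    have hwne : w i ≠ 0 := (hwpos i).ne'
    have he'i : e' i = fun k => ek k - t i * A i k := by
      funext k
      rw [he' i k, ← hw i, ht i, hd i]
      field_simp
      ring
    have hce' : ∀ j, c (e' i) j = c ek j - t i * c (A i) j := by
      intro j
      rw [he'i]
      exact clin _ _ _ j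
    have hexp : (∑ j ∈ H, c (e' i) j ^ 2) = EH - 2 * t i * α i + t i ^ 2 * β i := by
      calc (∑ j ∈ H, c (e' i) j ^ 2)
          = ∑ j ∈ H, (c ek j ^ 2 - 2 * t i * (c ek j * c (A i) j)
              + t i ^ 2 * c (A i) j ^ 2) := by
            refine Finset.sum_congr rfl fun j _ => ?_
            rw [hce' j]
            ring
        _ = EH - 2 * t i * α i + t i ^ 2 * β i := by
            rw [Finset.sum_add_distrib, Finset.sum_sub_distrib, ← Finset.mul_sum,
              ← Finset.mul_sum, ← hEH, ← hα, ← hβ]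
    rw [hexp, ht i, hγ i]
    field_simp
    ring
  -- summing up
  have hsum : (∑ i, (w i / F) * (∑ j ∈ H, c (e' i) j ^ 2))
      = EH - (2 / F) * (∑ i, d i * α i) + (1 / F) * (∑ i, d i ^ 2 * β i / w i)
        + (2 / F) * (∑ i, η i * γ i) + (1 / F) * (∑ i, η i ^ 2 * β i / w i) := by
    calc (∑ i, (w i / F) * (∑ j ∈ H, c (e' i) j ^ 2))
        = ∑ i, ((w i / F) * EH - (2 / F) * (d i * α i) + (1 / F) * (d i ^ 2 * β i / w i)
            + (2 / F) * (η i * γ i) + (1 / F) * (η i ^ 2 * β i / w i)) :=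
          Finset.sum_congr rfl fun i _ => hper i
      _ = (∑ i, w i / F) * EH - (2 / F) * (∑ i, d i * α i)
          + (1 / F) * (∑ i, d i ^ 2 * β i / w i)
          + (2 / F) * (∑ i, η i * γ i) + (1 / F) * (∑ i, η i ^ 2 * β i / w i) := by
          rw [Finset.sum_add_distrib, Finset.sum_add_distrib, Finset.sum_add_distrib,
            Finset.sum_sub_distrib, ← Finset.sum_mul, ← Finset.mul_sum, ← Finset.mul_sum,
            ← Finset.mul_sum, ← Finset.mul_sum]
      _ = _ := by
          have h1 : (∑ i, w i / F) = 1 := by rw [← Finset.sum_div, ← hFw, div_self hFne]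
          rw [h1, one_mul]
  -- final assembly
  have hgoalL : (∑ i, ((∑ l, A i l ^ 2) / F) * (∑ k, PH (e' i) k ^ 2))
      = ∑ i, (w i / F) * (∑ j ∈ H, c (e' i) j ^ 2) :=
    Finset.sum_congr rfl fun i _ => by rw [hPHnorm, ← hw i]
  rw [hgoalL, hsum, hPLnorm, ← hEL, hPHnorm ek, ← hEH, ← hE]
  have b1 : 0 ≤ (2 / F) * (∑ i, d i * α i) := by positivity
  have b2 : (1 / F) * (∑ i, d i ^ 2 * β i / w i) ≤ (1 / F) * (E * (c₂ * F)) :=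
    mul_le_mul_of_nonneg_left hX2 (by positivity)
  have b3 : (2 / F) * (∑ i, η i * γ i) ≤
      (2 / F) * (δ * (Real.sqrt E * (Real.sqrt c₂ * Real.sqrt F))) :=
    mul_le_mul_of_nonneg_left hX3 (by positivity)
  have b4 : (1 / F) * (∑ i, η i ^ 2 * β i / w i) ≤ (1 / F) * δ ^ 2 :=
    mul_le_mul_of_nonneg_left hX4 (by positivity)
  have e2 : (1 / F) * (E * (c₂ * F)) = c₂ * EL + c₂ * EH := by
    rw [hEsplit]
    field_simp
  have e4 : (1 / F) * δ ^ 2 = δ ^ 2 / F := by ring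
  have hsFpos : 0 < Real.sqrt F := Real.sqrt_pos.mpr hFpos
  have hFs : Real.sqrt F * Real.sqrt F = F := Real.mul_self_sqrt hFpos.le
  have e3 : (2 / F) * (δ * (Real.sqrt E * (Real.sqrt c₂ * Real.sqrt F)))
      = 2 / Real.sqrt F * δ * Real.sqrt c₂ * Real.sqrt E := by
    field_simp
    linear_combination (δ * Real.sqrt c₂ * Real.sqrt E) * hFs
  linarith
end

section
/- For complementary orthogonal projections P_L, P_H on ℝ^m, a nonzero a ∈ ℝ^m, and e = e_L + e_H with e_L = P_L e, e_H = P_H e, the quantity I := (‖P_H a‖² ⟨P_L a, e_L⟩ − ‖P_L a‖² ⟨P_H a, e_H⟩)/‖a‖² satisfies I² ≤ ‖P_H a‖² ‖e‖². -/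
open Matrix

theorem aux_orth {m : ℕ} (PL PH : Matrix (Fin m) (Fin m) ℝ)
    (hLsymm : PLᵀ = PL) (horth : PL * PH = 0) (u v : Fin m → ℝ) :
    (PL.mulVec u) ⬝ᵥ (PH.mulVec v) = 0 := by
  rw [dotProduct_mulVec]
  have h1 : PL.mulVec u = u ᵥ* PL := by
    have h2 := mulVec_transpose PL u
    rwa [hLsymm] at h2
  rw [h1, vecMul_vecMul, horth]
  simp

set_option maxHeartbeats 800000 in
/-- For complementary orthogonal projections `P_L, P_H` and `e = e_L + e_H`,
`I := (‖P_H a‖²⟨P_L a, e_L⟩ − ‖P_L a‖²⟨P_H a, e_H⟩)/‖a‖²` satisfies `I² ≤ ‖P_H a‖²‖e‖²`. -/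
theorem rkm_cross_term_bound (m : ℕ) (PL PH : Matrix (Fin m) (Fin m) ℝ)
    (hsum : PL + PH = 1) (hLsymm : PLᵀ = PL) (hHsymm : PHᵀ = PH)
    (hLidem : PL * PL = PL) (hHidem : PH * PH = PH) (horth : PL * PH = 0)
    (a : Fin m → ℝ) (ha : a ≠ 0)
    (e eL eH : Fin m → ℝ) (heL : eL = PL.mulVec e) (heH : eH = PH.mulVec e)
    (I : ℝ)
    (hI : I = ((∑ k, (PH.mulVec a) k ^ 2) * ((PL.mulVec a) ⬝ᵥ eL)
      - (∑ k, (PL.mulVec a) k ^ 2) * ((PH.mulVec a) ⬝ᵥ eH)) / (∑ k, a k ^ 2)) :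
    I ^ 2 ≤ (∑ k, (PH.mulVec a) k ^ 2) * (∑ k, e k ^ 2) := by
  -- notation
  set α := ∑ k, (PL.mulVec a) k ^ 2 with hα
  set β := ∑ k, (PH.mulVec a) k ^ 2 with hβ
  set x := (PL.mulVec a) ⬝ᵥ eL with hx
  set y := (PH.mulVec a) ⬝ᵥ eH with hy
  set u := ∑ k, eL k ^ 2 with hu
  set v := ∑ k, eH k ^ 2 with hv
  have horth' : PH * PL = 0 := by
    have := congrArg Matrix.transpose horth
    simpa [Matrix.transpose_mul, hLsymm, hHsymm] using this
  -- splitting vectors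
  have hsplit : ∀ w : Fin m → ℝ, PL.mulVec w + PH.mulVec w = w := by
    intro w
    rw [← add_mulVec, hsum, one_mulVec]
  -- dot product vs sum of squares
  have hdp : ∀ w : Fin m → ℝ, w ⬝ᵥ w = ∑ k, w k ^ 2 := by
    intro w; simp [dotProduct, pow_two]
  have hcross_a : (PL.mulVec a) ⬝ᵥ (PH.mulVec a) = 0 := aux_orth PL PH hLsymm horth a a
  have hcross_a' : (PH.mulVec a) ⬝ᵥ (PL.mulVec a) = 0 := aux_orth PH PL hHsymm horth' a a
  have hcross_e : eL ⬝ᵥ eH = 0 := by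
    rw [heL, heH]; exact aux_orth PL PH hLsymm horth e e
  have hcross_e' : eH ⬝ᵥ eL = 0 := by
    rw [heL, heH]; exact aux_orth PH PL hHsymm horth' e e
  have hsum2 : ∀ p q : Fin m → ℝ, p ⬝ᵥ q = 0 → q ⬝ᵥ p = 0 →
      ∑ k, (p + q) k ^ 2 = (∑ k, p k ^ 2) + ∑ k, q k ^ 2 := by
    intro p q h1 h2
    rw [← hdp, ← hdp, ← hdp, add_dotProduct, dotProduct_add, dotProduct_add, h1, h2]
    ring
  have hA : ∑ k, a k ^ 2 = α + β := by
    rw [hα, hβ, ← hsum2 _ _ hcross_a hcross_a', hsplit a]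
  have hE : ∑ k, e k ^ 2 = u + v := by
    have he : eL + eH = e := by rw [heL, heH]; exact hsplit e
    rw [hu, hv, ← hsum2 _ _ hcross_e hcross_e', he]
  -- Cauchy–Schwarz
  have hCSx : x ^ 2 ≤ α * u := by
    rw [hx, hα, hu]
    simpa [dotProduct] using
      Finset.sum_mul_sq_le_sq_mul_sq Finset.univ (PL.mulVec a) eL
  have hCSy : y ^ 2 ≤ β * v := by
    rw [hy, hβ, hv]
    simpa [dotProduct] using
      Finset.sum_mul_sq_le_sq_mul_sq Finset.univ (PH.mulVec a) eH
  -- positivity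
  have hαnn : 0 ≤ α := Finset.sum_nonneg fun _ _ => sq_nonneg _
  have hβnn : 0 ≤ β := Finset.sum_nonneg fun _ _ => sq_nonneg _
  have hunn : 0 ≤ u := Finset.sum_nonneg fun _ _ => sq_nonneg _
  have hvnn : 0 ≤ v := Finset.sum_nonneg fun _ _ => sq_nonneg _
  have hApos : 0 < α + β := by
    rw [← hA]
    rcases Function.ne_iff.mp ha with ⟨k, hk⟩
    exact Finset.sum_pos' (fun _ _ => sq_nonneg _)
      ⟨k, Finset.mem_univ k, lt_of_le_of_ne (sq_nonneg _) (Ne.symm (pow_ne_zero 2 hk))⟩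
  rw [hI, hA, hE, div_pow, div_le_iff₀ (by positivity)]
  have key : (β * x - α * y) ^ 2 ≤ α * β * (α + β) * (u + v) := by
    nlinarith [mul_nonneg (mul_nonneg hαnn hβnn) (sq_nonneg (x + y)),
      mul_nonneg (mul_nonneg hβnn (add_pos hApos hApos).le) (sub_nonneg.mpr hCSx),
      mul_nonneg (mul_nonneg hαnn hApos.le) (sub_nonneg.mpr hCSy),
      mul_nonneg hβnn (sub_nonneg.mpr hCSx), mul_nonneg hαnn (sub_nonneg.mpr hCSy)]
  nlinarith [mul_nonneg (mul_nonneg (mul_nonneg hβnn hβnn) hApos.le)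
    (add_nonneg hunn hvnn)]
end
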